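/- For every n ≥ 1 and every λ ∈ k, the representation M_n(λ) of the quiver Q̃ is indecomposable; moreover every endomorphism of M_n(λ) is of the form (f, f, f⊕f, f, f) for a single n×n matrix f commuting with J_n(λ), and M_n(λ) ≅ M_m(μ) if and only if n = m and λ = μ. (This is the continuous one-parameter series of representations of the quiver of type D̃ used in the reduction for skew-gentle algebras.) -/

import Mathlib

variable (k : Type) [Field k]

/-- A finite-dimensional representation of the quiver `Q̃` with vertices `1,…,5`
and arrows `a : 1 → 3`, `b : 2 → 3`, `c : 3 → 4`, `d : 3 → 5`. -/
structure Q5Rep where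
  V1 : Type
  V2 : Type
  V3 : Type
  V4 : Type
  V5 : Type
  [acg1 : AddCommGroup V1]
  [acg2 : AddCommGroup V2]
  [acg3 : AddCommGroup V3]
  [acg4 : AddCommGroup V4]
  [acg5 : AddCommGroup V5]
  [mod1 : Module k V1]
  [mod2 : Module k V2]
  [mod3 : Module k V3]
  [mod4 : Module k V4]
  [mod5 : Module k V5]
  [fin1 : FiniteDimensional k V1]
  [fin2 : FiniteDimensional k V2]
  [fin3 : FiniteDimensional k V3]
  [fin4 : FiniteDimensional k V4]
  [fin5 : FiniteDimensional k V5]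
  ma : V1 →ₗ[k] V3
  mb : V2 →ₗ[k] V3
  mc : V3 →ₗ[k] V4
  md : V3 →ₗ[k] V5

attribute [instance] Q5Rep.acg1 Q5Rep.acg2 Q5Rep.acg3 Q5Rep.acg4 Q5Rep.acg5
  Q5Rep.mod1 Q5Rep.mod2 Q5Rep.mod3 Q5Rep.mod4 Q5Rep.mod5
  Q5Rep.fin1 Q5Rep.fin2 Q5Rep.fin3 Q5Rep.fin4 Q5Rep.fin5

variable {k}

/-- Morphisms of representations of `Q̃`. -/
@[ext]
structure Q5Hom (M N : Q5Rep k) where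
  f1 : M.V1 →ₗ[k] N.V1
  f2 : M.V2 →ₗ[k] N.V2
  f3 : M.V3 →ₗ[k] N.V3
  f4 : M.V4 →ₗ[k] N.V4
  f5 : M.V5 →ₗ[k] N.V5
  comm_a : f3 ∘ₗ M.ma = N.ma ∘ₗ f1
  comm_b : f3 ∘ₗ M.mb = N.mb ∘ₗ f2
  comm_c : f4 ∘ₗ M.mc = N.mc ∘ₗ f3
  comm_d : f5 ∘ₗ M.md = N.md ∘ₗ f3

/-- Two representations are isomorphic iff there is a morphism all of whose
components are bijective. -/
def Q5Iso (M N : Q5Rep k) : Prop :=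
  ∃ f : Q5Hom M N, Function.Bijective f.f1 ∧ Function.Bijective f.f2 ∧
    Function.Bijective f.f3 ∧ Function.Bijective f.f4 ∧ Function.Bijective f.f5

/-- The zero representation(s). -/
def Q5Rep.IsZeroRep (M : Q5Rep k) : Prop :=
  Subsingleton M.V1 ∧ Subsingleton M.V2 ∧ Subsingleton M.V3 ∧
    Subsingleton M.V4 ∧ Subsingleton M.V5

/-- Vertexwise direct sum of representations. -/
def Q5Rep.dsum (M N : Q5Rep k) : Q5Rep k where
  V1 := M.V1 × N.V1
  V2 := M.V2 × N.V2
  V3 := M.V3 × N.V3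
  V4 := M.V4 × N.V4
  V5 := M.V5 × N.V5
  ma := M.ma.prodMap N.ma
  mb := M.mb.prodMap N.mb
  mc := M.mc.prodMap N.mc
  md := M.md.prodMap N.md

/-- Direct sum of `n` copies of a representation. -/
def Q5Rep.dpow (M : Q5Rep k) (n : ℕ) : Q5Rep k where
  V1 := Fin n → M.V1
  V2 := Fin n → M.V2
  V3 := Fin n → M.V3
  V4 := Fin n → M.V4
  V5 := Fin n → M.V5
  ma := M.ma.compLeft (Fin n)
  mb := M.mb.compLeft (Fin n)
  mc := M.mc.compLeft (Fin n)
  md := M.md.compLeft (Fin n)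

/-- A representation is indecomposable if it is nonzero and not isomorphic to a
direct sum of two nonzero representations. -/
def Q5Rep.Indecomposable (M : Q5Rep k) : Prop :=
  ¬ M.IsZeroRep ∧ ∀ A B : Q5Rep k, Q5Iso M (A.dsum B) → A.IsZeroRep ∨ B.IsZeroRep

/-- `0 → A → B → C → 0` is short exact (vertexwise). -/
def Q5ShortExact {A B C : Q5Rep k} (f : Q5Hom A B) (g : Q5Hom B C) : Prop :=
  (Function.Injective f.f1 ∧ Function.Injective f.f2 ∧ Function.Injective f.f3 ∧
    Function.Injective f.f4 ∧ Function.Injective f.f5) ∧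
  (Function.Surjective g.f1 ∧ Function.Surjective g.f2 ∧ Function.Surjective g.f3 ∧
    Function.Surjective g.f4 ∧ Function.Surjective g.f5) ∧
  (LinearMap.range f.f1 = LinearMap.ker g.f1 ∧ LinearMap.range f.f2 = LinearMap.ker g.f2 ∧
    LinearMap.range f.f3 = LinearMap.ker g.f3 ∧ LinearMap.range f.f4 = LinearMap.ker g.f4 ∧
    LinearMap.range f.f5 = LinearMap.ker g.f5)

variable (k)

/-- The `n×n` Jordan block with eigenvalue `lam`, as a linear endomorphism of `kⁿ`. -/
def jordan (n : ℕ) (lam : k) : (Fin n → k) →ₗ[k] (Fin n → k) :=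
  Matrix.mulVecLin (Matrix.of fun i j : Fin n =>
    if i = j then lam else if (i : ℕ) + 1 = (j : ℕ) then 1 else 0)

/-- The representation `M_n(λ)` of `Q̃`: `V₁ = V₂ = V₄ = V₅ = kⁿ`, `V₃ = kⁿ ⊕ kⁿ`,
`m_a x = (x,0)`, `m_b y = (0,y)`, `m_c (u,v) = u + v`, `m_d (u,v) = u + J_n(λ) v`. -/
def M5lam (n : ℕ) (lam : k) : Q5Rep k where
  V1 := Fin n → k
  V2 := Fin n → k
  V3 := (Fin n → k) × (Fin n → k)
  V4 := Fin n → k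
  V5 := Fin n → k
  ma := LinearMap.inl k _ _
  mb := LinearMap.inr k _ _
  mc := LinearMap.coprod LinearMap.id LinearMap.id
  md := LinearMap.coprod LinearMap.id (jordan k n lam)


variable {k}

lemma jordan_apply (n : ℕ) (lam : k) (v : Fin n → k) (i : Fin n) :
    jordan k n lam v i = lam * v i + (if h : (i : ℕ) + 1 < n then v ⟨(i : ℕ) + 1, h⟩ else 0) := by
  unfold jordan
  rw [Matrix.mulVecLin_apply]
  simp only [Matrix.mulVec, dotProduct, Matrix.of_apply]
  have hterm : ∀ j : Fin n, (if i = j then lam else if (i : ℕ) + 1 = (j : ℕ) then (1:k) else 0) * v j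
      = (if i = j then lam * v j else 0) + (if (i : ℕ) + 1 = (j : ℕ) then v j else 0) := by
    intro j
    by_cases h1 : i = j
    · subst h1
      have : ¬((i : ℕ) + 1 = (i : ℕ)) := by omega
      simp [this]
    · by_cases h2 : (i : ℕ) + 1 = (j : ℕ) <;> simp [h1, h2]
  rw [Finset.sum_congr rfl fun j _ => hterm j, Finset.sum_add_distrib]
  congr 1
  · rw [Finset.sum_ite_eq]
    simp
  · by_cases h : (i : ℕ) + 1 < n
    · rw [Finset.sum_eq_single (⟨(i : ℕ) + 1, h⟩ : Fin n)]
      · simp [h]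
      · intro j _ hj
        have : ¬((i : ℕ) + 1 = (j : ℕ)) := by
          intro hc; apply hj; exact Fin.ext hc.symm
        simp [this]
      · simp
    · rw [dif_neg h]
      apply Finset.sum_eq_zero
      intro j _
      have : ¬((i : ℕ) + 1 = (j : ℕ)) := by have := j.isLt; omega
      simp [this]

lemma single_mem_of_invariant (n : ℕ) (hn : 1 ≤ n) (W : Submodule k (Fin n → k))
    (hW : ∀ v ∈ W, jordan k n 0 v ∈ W) (v : Fin n → k) (hv : v ∈ W) (hv0 : v ≠ 0) :
    Pi.single (⟨0, hn⟩ : Fin n) (1 : k) ∈ W := by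
  have key : ∀ M : ℕ, ∀ v : Fin n → k, v ∈ W → v ≠ 0 →
      (∀ i : Fin n, v i ≠ 0 → (i : ℕ) ≤ M) → Pi.single (⟨0, hn⟩ : Fin n) (1 : k) ∈ W := by
    intro M
    induction M with
    | zero =>
      intro v hv hv0 hbd
      obtain ⟨i, hi⟩ := Function.ne_iff.mp hv0
      have hi' : v i ≠ 0 := by simpa using hi
      have hiz : i = (⟨0, hn⟩ : Fin n) := Fin.ext (Nat.le_zero.mp (hbd i hi'))
      subst hiz
      have heq : Pi.single (⟨0, hn⟩ : Fin n) (1 : k) = (v ⟨0, hn⟩)⁻¹ • v := by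
        funext j
        by_cases hj : j = (⟨0, hn⟩ : Fin n)
        · subst hj
          simp [Pi.single_eq_same, inv_mul_cancel₀ hi']
        · have hvj : v j = 0 := by
            by_contra hc
            exact hj (Fin.ext (Nat.le_zero.mp (hbd j hc)))
          simp [Pi.single_eq_of_ne hj, hvj]
      rw [heq]
      exact W.smul_mem _ hv
    | succ M ih =>
      intro v hv hv0 hbd
      by_cases hall : ∀ i : Fin n, v i ≠ 0 → (i : ℕ) ≤ M
      · exact ih v hv hv0 hall
      · push_neg at hall
        obtain ⟨i0, hi0ne, hi0gt⟩ := hall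
        have hi0 : (i0 : ℕ) = M + 1 := le_antisymm (hbd i0 hi0ne) hi0gt
        set w := jordan k n 0 v with hwdef
        have hw : w ∈ W := hW v hv
        have hwapp : ∀ i : Fin n, w i = if h : (i : ℕ) + 1 < n then v ⟨(i : ℕ) + 1, h⟩ else 0 := by
          intro i
          rw [hwdef, jordan_apply]
          ring_nf
        have hMn : M < n := by have := i0.isLt; omega
        have hwne : w ≠ 0 := by
          intro hc
          have h1 : w ⟨M, hMn⟩ = v i0 := by
            rw [hwapp]
            have h2 : M + 1 < n := by have := i0.isLt; omega
            rw [dif_pos h2]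
            congr 1
            exact Fin.ext (by simp [hi0])
          rw [hc] at h1
          exact hi0ne (by simpa using h1.symm)
        have hwbd : ∀ i : Fin n, w i ≠ 0 → (i : ℕ) ≤ M := by
          intro i hi
          rw [hwapp] at hi
          by_cases h : (i : ℕ) + 1 < n
          · rw [dif_pos h] at hi
            have := hbd _ hi
            simpa using this
          · rw [dif_neg h] at hi; exact absurd rfl hi
        exact ih w hw hwne hwbd
  exact key n v hv hv0 fun i _ => le_of_lt i.isLt

lemma idem_zero_or_id (n : ℕ) (hn : 1 ≤ n) (lam : k) (f : (Fin n → k) →ₗ[k] (Fin n → k))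
    (hcomm : f ∘ₗ jordan k n lam = jordan k n lam ∘ₗ f) (hidem : f ∘ₗ f = f) :
    f = 0 ∨ f = LinearMap.id := by
  have hJ : ∀ x, f (jordan k n lam x) = jordan k n lam (f x) := fun x =>
    (LinearMap.ext_iff.mp hcomm x)
  have hNpt : ∀ x, jordan k n 0 x = jordan k n lam x - lam • x := by
    intro x; funext i
    simp [jordan_apply, Pi.sub_apply, Pi.smul_apply, smul_eq_mul]
  have hN : ∀ x, f (jordan k n 0 x) = jordan k n 0 (f x) := by
    intro x
    rw [hNpt, hNpt, map_sub, map_smul, hJ x]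
  have hid : ∀ x, f (f x) = f x := fun x => LinearMap.ext_iff.mp hidem x
  by_contra hcon
  push_neg at hcon
  obtain ⟨hne0, hneid⟩ := hcon
  set e0 : Fin n → k := Pi.single (⟨0, hn⟩ : Fin n) (1 : k) with he0
  have hrange : e0 ∈ LinearMap.range f := by
    obtain ⟨x, hx⟩ := DFunLike.ne_iff.mp hne0
    refine single_mem_of_invariant n hn (LinearMap.range f) ?_ (f x) ⟨x, rfl⟩ (by simpa using hx)
    rintro v ⟨y, rfl⟩
    exact ⟨jordan k n 0 y, hN y⟩
  have hker : e0 ∈ LinearMap.ker f := by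
    obtain ⟨x, hx⟩ : ∃ x, f x ≠ x := by
      by_contra hc
      push_neg at hc
      exact hneid (LinearMap.ext hc)
    refine single_mem_of_invariant n hn (LinearMap.ker f) ?_ (x - f x) ?_
      (sub_ne_zero.mpr (fun h => hx h.symm))
    · intro v hv
      rw [LinearMap.mem_ker] at hv ⊢
      rw [hN, hv, map_zero]
    · rw [LinearMap.mem_ker, map_sub, hid, sub_self]
  obtain ⟨u, hu⟩ := hrange
  have h1 : f e0 = e0 := by rw [← hu, hid]
  rw [LinearMap.mem_ker] at hker
  rw [hker] at h1
  have : (1 : k) = 0 := by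
    have := congrFun h1 ⟨0, hn⟩
    simpa [he0, Pi.single_eq_same] using this.symm
  exact one_ne_zero this

lemma eigen_eq (n : ℕ) (hn : 1 ≤ n) (lam mu : k) (f : (Fin n → k) →ₗ[k] (Fin n → k))
    (hb : Function.Bijective f)
    (hcomm : f ∘ₗ jordan k n lam = jordan k n mu ∘ₗ f) : lam = mu := by
  set Jl : Matrix (Fin n) (Fin n) k := Matrix.of fun i j : Fin n =>
    if i = j then lam else if (i : ℕ) + 1 = (j : ℕ) then 1 else 0 with hJl
  set Jm : Matrix (Fin n) (Fin n) k := Matrix.of fun i j : Fin n =>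
    if i = j then mu else if (i : ℕ) + 1 = (j : ℕ) then 1 else 0 with hJm
  have hjl : LinearMap.toMatrix' (jordan k n lam) = Jl := by
    rw [show jordan k n lam = Matrix.toLin' Jl from (Matrix.toLin'_apply' Jl).symm ▸ rfl,
      LinearMap.toMatrix'_toLin']
  have hjm : LinearMap.toMatrix' (jordan k n mu) = Jm := by
    rw [show jordan k n mu = Matrix.toLin' Jm from (Matrix.toLin'_apply' Jm).symm ▸ rfl,
      LinearMap.toMatrix'_toLin']
  set F := LinearMap.toMatrix' f with hF
  have hFJ : F * Jl = Jm * F := by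
    rw [← hjl, ← hjm, ← LinearMap.toMatrix'_comp, ← LinearMap.toMatrix'_comp, hcomm]
  set ψ := LinearEquiv.ofBijective f hb with hψ
  have hfg : f ∘ₗ ψ.symm.toLinearMap = LinearMap.id := by
    apply LinearMap.ext
    intro x
    exact ψ.apply_symm_apply x
  have hFdet : F.det * (LinearMap.toMatrix' ψ.symm.toLinearMap).det = 1 := by
    rw [← Matrix.det_mul, ← LinearMap.toMatrix'_comp, hfg, LinearMap.toMatrix'_id, Matrix.det_one]
  have hFJ2 : F * (Jl - lam • 1) = (Jm - lam • 1) * F := by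
    rw [Matrix.mul_sub, Matrix.sub_mul, hFJ]
    congr 1
    rw [Matrix.mul_smul, Matrix.smul_mul, Matrix.mul_one, Matrix.one_mul]
  have hdl : (Jl - lam • 1).det = 0 := by
    rw [Matrix.det_of_upperTriangular]
    · apply Finset.prod_eq_zero (Finset.mem_univ (⟨0, hn⟩ : Fin n))
      simp [hJl, Matrix.sub_apply, Matrix.smul_apply, Matrix.one_apply]
    · intro i j hij
      have h1 : ¬(i = j) := by intro h; subst h; exact absurd hij (lt_irrefl _)
      have h2 : ¬((i : ℕ) + 1 = (j : ℕ)) := by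
        have : (j : ℕ) < (i : ℕ) := hij
        omega
      simp [hJl, Matrix.sub_apply, Matrix.smul_apply, Matrix.one_apply, h1, h2, Ne.symm h1]
  have hdm : (Jm - lam • 1).det = (mu - lam) ^ n := by
    rw [Matrix.det_of_upperTriangular]
    · rw [Finset.prod_congr rfl (g := fun _ => mu - lam) (fun i _ => by
        simp [hJm, Matrix.sub_apply, Matrix.smul_apply, Matrix.one_apply])]
      simp
    · intro i j hij
      have h1 : ¬(i = j) := by intro h; subst h; exact absurd hij (lt_irrefl _)
      have h2 : ¬((i : ℕ) + 1 = (j : ℕ)) := by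
        have : (j : ℕ) < (i : ℕ) := hij
        omega
      simp [hJm, Matrix.sub_apply, Matrix.smul_apply, Matrix.one_apply, h1, h2, Ne.symm h1]
  have hdet : F.det * (Jl - lam • 1).det = (Jm - lam • 1).det * F.det := by
    rw [← Matrix.det_mul, ← Matrix.det_mul, hFJ2]
  rw [hdl, hdm, mul_zero] at hdet
  have hFne : F.det ≠ 0 := fun h => by simp [h] at hFdet
  have hz : (mu - lam) ^ n = 0 := by
    rcases mul_eq_zero.mp hdet.symm with h | h
    · exact h
    · exact absurd h hFne
  have := pow_eq_zero_iff (by omega : n ≠ 0) |>.mp hz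
  exact (sub_eq_zero.mp this).symm

/-- Structure of homomorphisms between the representations `M_n(λ)` and `M_m(μ)`. -/
lemma M5_hom_structure {n m : ℕ} {lam mu : k} (g : Q5Hom (M5lam k n lam) (M5lam k m mu)) :
    g.f2 = g.f1 ∧ g.f3 = g.f1.prodMap g.f1 ∧ g.f4 = g.f1 ∧ g.f5 = g.f1 ∧
    g.f1 ∘ₗ jordan k n lam = jordan k m mu ∘ₗ g.f1 := by
  have ha : ∀ x : Fin n → k,
      g.f3 ((x, 0) : (Fin n → k) × (Fin n → k)) = ((g.f1 x, 0) : (Fin m → k) × (Fin m → k)) :=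
    fun x => LinearMap.ext_iff.mp g.comm_a x
  have hbb : ∀ y : Fin n → k,
      g.f3 ((0, y) : (Fin n → k) × (Fin n → k)) = ((0, g.f2 y) : (Fin m → k) × (Fin m → k)) :=
    fun y => LinearMap.ext_iff.mp g.comm_b y
  have hcc : ∀ p : (Fin n → k) × (Fin n → k),
      g.f4 (p.1 + p.2) = (g.f3 p).1 + (g.f3 p).2 :=
    fun p => LinearMap.ext_iff.mp g.comm_c p
  have hdd : ∀ p : (Fin n → k) × (Fin n → k),
      g.f5 (p.1 + jordan k n lam p.2) = (g.f3 p).1 + jordan k m mu (g.f3 p).2 :=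
    fun p => LinearMap.ext_iff.mp g.comm_d p
  have hc1 : ∀ x : Fin n → k, g.f4 x = g.f1 x := by
    intro x
    have h := hcc (x, 0)
    rw [ha x] at h
    simp at h; exact h.trans (add_zero _)
  have hc2 : ∀ y : Fin n → k, g.f4 y = g.f2 y := by
    intro y
    have h := hcc (0, y)
    rw [hbb y] at h
    simp at h; exact h.trans (zero_add _)
  have hf2 : ∀ y : Fin n → k, g.f2 y = g.f1 y := fun y => (hc2 y).symm.trans (hc1 y)
  have hd1 : ∀ x : Fin n → k, g.f5 x = g.f1 x := by
    intro x
    have h := hdd (x, 0)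
    rw [ha x] at h
    simp at h; exact h.trans (add_zero _)
  have hd2 : ∀ y : Fin n → k, g.f1 (jordan k n lam y) = jordan k m mu (g.f1 y) := by
    intro y
    have h := hdd (0, y)
    rw [hbb y] at h
    simp only [map_zero, zero_add] at h
    rw [hd1 (jordan k n lam y), hf2 y] at h
    exact h
  have hx3 : ∀ p : (Fin n → k) × (Fin n → k), g.f3 p = (g.f1.prodMap g.f1) p := by
    intro p
    have hp : p = ((p.1, 0) : (Fin n → k) × (Fin n → k)) + (0, p.2) := by
      ext <;> simp
    have hsum : g.f3 p = g.f3 ((p.1, 0) : (Fin n → k) × (Fin n → k)) + g.f3 (0, p.2) := by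
      exact (congrArg g.f3 hp).trans (map_add g.f3 _ _)
    rw [hsum, ha, hbb]
    have hadd : ((g.f1 p.1, 0) : (Fin m → k) × (Fin m → k)) + ((0, g.f2 p.2) :
        (Fin m → k) × (Fin m → k)) = ((g.f1 p.1, g.f1 p.2) : (Fin m → k) × (Fin m → k)) := by
      exact Prod.ext (add_zero (g.f1 p.1)) ((zero_add _).trans (hf2 p.2))
    exact hadd.trans rfl
  exact ⟨LinearMap.ext hf2, LinearMap.ext hx3, LinearMap.ext hc1, LinearMap.ext hd1,
    LinearMap.ext hd2⟩

variable {V W VA VB WA WB : Type}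
  [AddCommGroup V] [Module k V] [AddCommGroup W] [Module k W]
  [AddCommGroup VA] [Module k VA] [AddCommGroup VB] [Module k VB]
  [AddCommGroup WA] [Module k WA] [AddCommGroup WB] [Module k WB]

lemma conj_comm_helper (m : V →ₗ[k] W) (mA : VA →ₗ[k] WA) (mB : VB →ₗ[k] WB)
    (φV : V →ₗ[k] VA × VB) (φW : W →ₗ[k] WA × WB)
    (hV : Function.Bijective φV) (hW : Function.Bijective φW)
    (hcomm : φW ∘ₗ m = (mA.prodMap mB) ∘ₗ φV) :
    ((LinearEquiv.ofBijective φW hW).symm.toLinearMap ∘ₗ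
        ((LinearMap.id : WA →ₗ[k] WA).prodMap (0 : WB →ₗ[k] WB)) ∘ₗ φW) ∘ₗ m
      = m ∘ₗ ((LinearEquiv.ofBijective φV hV).symm.toLinearMap ∘ₗ
        ((LinearMap.id : VA →ₗ[k] VA).prodMap (0 : VB →ₗ[k] VB)) ∘ₗ φV) := by
  have hc := LinearMap.ext_iff.mp hcomm
  simp only [LinearMap.comp_apply] at hc
  apply LinearMap.ext
  intro x
  simp only [LinearMap.comp_apply, LinearEquiv.coe_coe]
  apply (LinearEquiv.ofBijective φW hW).injective
  rw [LinearEquiv.apply_symm_apply]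
  have hcoW : ∀ y : W, (LinearEquiv.ofBijective φW hW) y = φW y := fun _ => rfl
  have hcoV : ∀ y : VA × VB, φV ((LinearEquiv.ofBijective φV hV).symm y) = y := fun y =>
    (LinearEquiv.ofBijective φV hV).apply_symm_apply y
  rw [hcoW, hc, hc, hcoV]
  simp [Prod.ext_iff, Prod.fst_add, Prod.snd_add]

lemma subsingleton_left_of_conj_zero (φ : V →ₗ[k] VA × VB) (hb : Function.Bijective φ)
    (h : (LinearEquiv.ofBijective φ hb).symm.toLinearMap ∘ₗ
        ((LinearMap.id : VA →ₗ[k] VA).prodMap (0 : VB →ₗ[k] VB)) ∘ₗ φ = 0) :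
    Subsingleton VA := by
  apply subsingleton_of_forall_eq (0 : VA)
  intro a
  have hx := LinearMap.ext_iff.mp h ((LinearEquiv.ofBijective φ hb).symm (a, 0))
  simp only [LinearMap.comp_apply, LinearMap.zero_apply, LinearEquiv.coe_coe] at hx
  have h1 : φ ((LinearEquiv.ofBijective φ hb).symm (a, 0)) = (a, 0) :=
    (LinearEquiv.ofBijective φ hb).apply_symm_apply (a, 0)
  rw [h1] at hx
  have h2 : ((LinearMap.id : VA →ₗ[k] VA).prodMap (0 : VB →ₗ[k] VB)) (a, 0)
      = ((a, 0) : VA × VB) := by simp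
  rw [h2] at hx
  have h3 : ((a, 0) : VA × VB) = 0 := by
    have := congrArg (LinearEquiv.ofBijective φ hb) hx
    simpa [LinearEquiv.apply_symm_apply] using this
  exact congrArg Prod.fst h3

lemma subsingleton_right_of_conj_id (φ : V →ₗ[k] VA × VB) (hb : Function.Bijective φ)
    (h : (LinearEquiv.ofBijective φ hb).symm.toLinearMap ∘ₗ
        ((LinearMap.id : VA →ₗ[k] VA).prodMap (0 : VB →ₗ[k] VB)) ∘ₗ φ = LinearMap.id) :
    Subsingleton VB := by
  apply subsingleton_of_forall_eq (0 : VB)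
  intro b
  have hx := LinearMap.ext_iff.mp h ((LinearEquiv.ofBijective φ hb).symm (0, b))
  simp only [LinearMap.comp_apply, LinearMap.id_apply, LinearEquiv.coe_coe] at hx
  have h1 : φ ((LinearEquiv.ofBijective φ hb).symm (0, b)) = (0, b) :=
    (LinearEquiv.ofBijective φ hb).apply_symm_apply (0, b)
  rw [h1] at hx
  have h2 : ((LinearMap.id : VA →ₗ[k] VA).prodMap (0 : VB →ₗ[k] VB)) (0, b)
      = ((0, 0) : VA × VB) := by simp
  rw [h2] at hx
  have h3 : ((0, 0) : VA × VB) = (0, b) :=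
    (LinearEquiv.ofBijective φ hb).symm.injective hx
  exact (congrArg Prod.snd h3).symm

lemma conj_idem (φ : V →ₗ[k] VA × VB) (hb : Function.Bijective φ) :
    ((LinearEquiv.ofBijective φ hb).symm.toLinearMap ∘ₗ
        ((LinearMap.id : VA →ₗ[k] VA).prodMap (0 : VB →ₗ[k] VB)) ∘ₗ φ) ∘ₗ
      ((LinearEquiv.ofBijective φ hb).symm.toLinearMap ∘ₗ
        ((LinearMap.id : VA →ₗ[k] VA).prodMap (0 : VB →ₗ[k] VB)) ∘ₗ φ)
    = (LinearEquiv.ofBijective φ hb).symm.toLinearMap ∘ₗ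
        ((LinearMap.id : VA →ₗ[k] VA).prodMap (0 : VB →ₗ[k] VB)) ∘ₗ φ := by
  apply LinearMap.ext
  intro x
  simp only [LinearMap.comp_apply, LinearEquiv.coe_coe]
  have hco : ∀ y : VA × VB, φ ((LinearEquiv.ofBijective φ hb).symm y) = y := fun y =>
    (LinearEquiv.ofBijective φ hb).apply_symm_apply y
  rw [hco]
  have hPP : ∀ q : VA × VB,
      ((LinearMap.id : VA →ₗ[k] VA).prodMap (0 : VB →ₗ[k] VB))
        (((LinearMap.id : VA →ₗ[k] VA).prodMap (0 : VB →ₗ[k] VB)) q)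
      = ((LinearMap.id : VA →ₗ[k] VA).prodMap (0 : VB →ₗ[k] VB)) q := by
    intro q; simp
  rw [hPP]

variable (k)

/-- for `n ≥ 1` and `λ ∈ k` the representation `M_n(λ)` of `Q̃` is
indecomposable; every endomorphism of `M_n(λ)` is of the form `(f,f,f⊕f,f,f)` for a
single `f` commuting with `J_n(λ)`; and `M_n(λ) ≅ M_m(μ)` iff `n = m` and `λ = μ`. -/
theorem stmt13 (k : Type) [Field k] (n : ℕ) (hn : 1 ≤ n) (lam : k) :
    (M5lam k n lam).Indecomposable ∧
    (∀ g : Q5Hom (M5lam k n lam) (M5lam k n lam),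
      ∃ f : (Fin n → k) →ₗ[k] (Fin n → k),
        g.f1 = f ∧ g.f2 = f ∧ g.f3 = f.prodMap f ∧ g.f4 = f ∧ g.f5 = f ∧
        f ∘ₗ jordan k n lam = jordan k n lam ∘ₗ f) ∧
    (∀ (m : ℕ), 1 ≤ m → ∀ mu : k,
      (Q5Iso (M5lam k n lam) (M5lam k m mu) ↔ n = m ∧ lam = mu)) := by
  constructor
  · -- indecomposability
    constructor
    · rintro ⟨h1, -, -, -, -⟩
      have h0 := @Subsingleton.elim ((M5lam k n lam).V1) h1
        (Pi.single (⟨0, hn⟩ : Fin n) (1 : k)) (0 : Fin n → k)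
      have := congrFun h0 ⟨0, hn⟩
      simp [Pi.single_eq_same] at this
    · rintro A B ⟨φ, hb1, hb2, hb3, hb4, hb5⟩
      let e : Q5Hom (M5lam k n lam) (M5lam k n lam) :=
        { f1 := (LinearEquiv.ofBijective φ.f1 hb1).symm.toLinearMap ∘ₗ
            ((LinearMap.id : A.V1 →ₗ[k] A.V1).prodMap (0 : B.V1 →ₗ[k] B.V1)) ∘ₗ φ.f1
          f2 := (LinearEquiv.ofBijective φ.f2 hb2).symm.toLinearMap ∘ₗ
            ((LinearMap.id : A.V2 →ₗ[k] A.V2).prodMap (0 : B.V2 →ₗ[k] B.V2)) ∘ₗ φ.f2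
          f3 := (LinearEquiv.ofBijective φ.f3 hb3).symm.toLinearMap ∘ₗ
            ((LinearMap.id : A.V3 →ₗ[k] A.V3).prodMap (0 : B.V3 →ₗ[k] B.V3)) ∘ₗ φ.f3
          f4 := (LinearEquiv.ofBijective φ.f4 hb4).symm.toLinearMap ∘ₗ
            ((LinearMap.id : A.V4 →ₗ[k] A.V4).prodMap (0 : B.V4 →ₗ[k] B.V4)) ∘ₗ φ.f4
          f5 := (LinearEquiv.ofBijective φ.f5 hb5).symm.toLinearMap ∘ₗ
            ((LinearMap.id : A.V5 →ₗ[k] A.V5).prodMap (0 : B.V5 →ₗ[k] B.V5)) ∘ₗ φ.f5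
          comm_a := conj_comm_helper (M5lam k n lam).ma A.ma B.ma φ.f1 φ.f3 hb1 hb3 φ.comm_a
          comm_b := conj_comm_helper (M5lam k n lam).mb A.mb B.mb φ.f2 φ.f3 hb2 hb3 φ.comm_b
          comm_c := conj_comm_helper (M5lam k n lam).mc A.mc B.mc φ.f3 φ.f4 hb3 hb4 φ.comm_c
          comm_d := conj_comm_helper (M5lam k n lam).md A.md B.md φ.f3 φ.f5 hb3 hb5 φ.comm_d }
      obtain ⟨hf2, hf3, hf4, hf5, hcomm⟩ := M5_hom_structure e
      have hidem : e.f1 ∘ₗ e.f1 = e.f1 := conj_idem φ.f1 hb1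
      rcases idem_zero_or_id n hn lam e.f1 hcomm hidem with h0 | hid
      · left
        have hf3z : e.f3 = 0 := by
          rw [hf3, h0]
          apply LinearMap.ext
          intro p
          rfl
        exact ⟨subsingleton_left_of_conj_zero φ.f1 hb1 h0,
          subsingleton_left_of_conj_zero φ.f2 hb2 (hf2.trans h0),
          subsingleton_left_of_conj_zero φ.f3 hb3 hf3z,
          subsingleton_left_of_conj_zero φ.f4 hb4 (hf4.trans h0),
          subsingleton_left_of_conj_zero φ.f5 hb5 (hf5.trans h0)⟩
      · right
        have hf3i : e.f3 = LinearMap.id := by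
          rw [hf3, hid]
          apply LinearMap.ext
          intro p
          rfl
        exact ⟨subsingleton_right_of_conj_id φ.f1 hb1 hid,
          subsingleton_right_of_conj_id φ.f2 hb2 (hf2.trans hid),
          subsingleton_right_of_conj_id φ.f3 hb3 hf3i,
          subsingleton_right_of_conj_id φ.f4 hb4 (hf4.trans hid),
          subsingleton_right_of_conj_id φ.f5 hb5 (hf5.trans hid)⟩
  constructor
  · -- endomorphisms
    intro g
    obtain ⟨hf2, hf3, hf4, hf5, hcomm⟩ := M5_hom_structure g
    exact ⟨g.f1, rfl, hf2, hf3, hf4, hf5, hcomm⟩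
  · -- isomorphism classification
    intro m hm mu
    constructor
    · rintro ⟨g, hb1, hb2, hb3, hb4, hb5⟩
      obtain ⟨hf2, hf3, hf4, hf5, hcomm⟩ := M5_hom_structure g
      have hnm : n = m := by
        have eqv : (Fin n → k) ≃ₗ[k] (Fin m → k) := LinearEquiv.ofBijective g.f1 hb1
        have h := eqv.finrank_eq
        simpa [Module.finrank_fin_fun] using h
      subst hnm
      exact ⟨rfl, eigen_eq n hn lam mu g.f1 hb1 hcomm⟩
    · rintro ⟨rfl, rfl⟩
      refine ⟨⟨LinearMap.id, LinearMap.id, LinearMap.id, LinearMap.id, LinearMap.id,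
        by simp, by simp, by simp, by simp⟩, ?_, ?_, ?_, ?_, ?_⟩ <;>
      · simpa [LinearMap.id_coe] using Function.bijective_id
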